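/- arXiv:2605.07117 — 2 statements merged into one kernel-verified Lean document; each statement's English description precedes it below -/
import Mathlib

section
/- Let Δ > 0 and σ₀ > 0, let δ ∈ (0,1), and set ε = (1/σ₀)·√(2·ln(1.25/δ)); assume ε < 1. Let μ, μ' ∈ ℝ with |μ − μ'| ≤ Δ and set σ² = σ₀²·Δ². Then for every measurable set A ⊆ ℝ, gaussianReal(μ, σ²)(A) ≤ e^ε · gaussianReal(μ', σ²)(A) + δ. That is, the one-dimensional Gaussian mechanism with sensitivity Δ and noise standard deviation σ₀·Δ is (ε,δ)-differentially private. -/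
open MeasureTheory ProbabilityTheory Real
open scoped NNReal ENNReal

lemma gm_symm {v : ℝ≥0} (s : ℝ) :
    gaussianReal 0 v (Set.Iio s) = gaussianReal 0 v (Set.Ioi (-s)) := by
  have h := gaussianReal_map_const_mul (μ := 0) (v := v) (-1)
  have h1 : (NNReal.mk ((-1:ℝ)^2) (sq_nonneg _)) = 1 := by ext; norm_num
  rw [h1, mul_zero, one_mul] at h
  have h2 : ((-1:ℝ) * ·) ⁻¹' (Set.Iio s) = Set.Ioi (-s) := by
    ext x; simp only [Set.mem_preimage, Set.mem_Iio, Set.mem_Ioi]; constructor <;> intro <;> linarith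
  conv_lhs => rw [← h]
  rw [Measure.map_apply (measurable_const_mul _) measurableSet_Iio, h2]

lemma gm_half (v : ℝ≥0) (hv : v ≠ 0) :
    ∫ x in Set.Ioi (0:ℝ), gaussianPDFReal 0 v x = 1/2 := by
  have hvpos : (0:ℝ) < v := by
    have : (0:ℝ) ≤ v := v.coe_nonneg
    rcases this.lt_or_eq with h | h
    · exact h
    · exact absurd (by exact_mod_cast h.symm) hv
  have key : ∫ x in Set.Ioi (0:ℝ), Real.exp (-(1/(2*(v:ℝ))) * x^2) = Real.sqrt (π / (1/(2*(v:ℝ)))) / 2 :=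
    integral_gaussian_Ioi _
  simp only [gaussianPDFReal, sub_zero]
  rw [integral_const_mul]
  have h2 : ∀ x : ℝ, Real.exp (-x^2/(2*(v:ℝ))) = Real.exp (-(1/(2*(v:ℝ))) * x^2) := by
    intro x; ring_nf
  rw [setIntegral_congr_fun measurableSet_Ioi (fun x _ => h2 x), key]
  have h4 : π / (1/(2*(v:ℝ))) = 2*π*(v:ℝ) := by field_simp
  rw [h4]
  have h3 : Real.sqrt (2*π*(v:ℝ)) ≠ 0 := by positivity
  field_simp

lemma gm_center (m : ℝ) {v : ℝ≥0} (s : Set ℝ) (hs : MeasurableSet s) :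
    gaussianReal m v s = gaussianReal 0 v ((· + m) ⁻¹' s) := by
  have h := gaussianReal_map_add_const (μ := 0) (v := v) m
  rw [zero_add] at h
  rw [← h, Measure.map_apply (measurable_add_const m) hs]

lemma gm_half_shift {v : ℝ≥0} (hv : v ≠ 0) (m : ℝ) :
    ∫ x in Set.Ioi m, gaussianPDFReal m v x = 1/2 := by
  have h := gm_center m (v := v) (Set.Ioi m) measurableSet_Ioi
  have hpre : (· + m) ⁻¹' Set.Ioi m = Set.Ioi (0:ℝ) := by
    ext x; simp [Set.mem_Ioi]
  rw [hpre] at h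
  rw [gaussianReal_apply_eq_integral _ hv, gaussianReal_apply_eq_integral _ hv, gm_half v hv] at h
  have h1 : 0 ≤ ∫ x in Set.Ioi m, gaussianPDFReal m v x :=
    integral_nonneg fun x => gaussianPDFReal_nonneg _ _ _
  rw [ENNReal.ofReal_eq_ofReal_iff h1 (by norm_num)] at h
  exact h

lemma gm_tail_pos {σ : ℝ} (hσ : 0 < σ) {v : ℝ≥0} (hv : (v:ℝ) = σ^2) {s : ℝ} (hs : 0 ≤ s) :
    gaussianReal 0 v (Set.Ioi s) ≤ ENNReal.ofReal (Real.exp (-(s/σ)^2/2) * (1/2)) := by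
  have hvpos : (0:ℝ) < v := by rw [hv]; positivity
  have hv0 : v ≠ 0 := by intro h; rw [h] at hvpos; simp at hvpos
  rw [gaussianReal_apply_eq_integral _ hv0]
  apply ENNReal.ofReal_le_ofReal
  have hpt : ∀ x ∈ Set.Ioi s, gaussianPDFReal 0 v x ≤
      Real.exp (-(s/σ)^2/2) * gaussianPDFReal s v x := by
    intro x hx
    simp only [Set.mem_Ioi] at hx
    simp only [gaussianPDFReal, sub_zero]
    rw [mul_left_comm, ← Real.exp_add]
    apply mul_le_mul_of_nonneg_left _ (by positivity)
    rw [Real.exp_le_exp]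
    rw [hv]
    have hσ2 : (0:ℝ) < σ^2 := by positivity
    have key : 0 ≤ 2 * s * (x - s) := by
      apply mul_nonneg (by positivity) (by linarith)
    have hσ0 : σ ≠ 0 := ne_of_gt hσ
    field_simp
    nlinarith [sq_nonneg σ, sq_nonneg (x-s), mul_nonneg key hσ2.le, mul_nonneg key (sq_nonneg σ)]
  calc ∫ x in Set.Ioi s, gaussianPDFReal 0 v x
      ≤ ∫ x in Set.Ioi s, Real.exp (-(s/σ)^2/2) * gaussianPDFReal s v x := by
        apply setIntegral_mono_on
          (integrable_gaussianPDFReal 0 v).integrableOn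
          (((integrable_gaussianPDFReal s v).const_mul _).integrableOn)
          measurableSet_Ioi hpt
    _ = Real.exp (-(s/σ)^2/2) * (1/2) := by
        rw [integral_const_mul, gm_half_shift hv0]

lemma gm_tail_neg {σ : ℝ} (hσ : 0 < σ) {v : ℝ≥0} (hv : (v:ℝ) = σ^2) {s : ℝ} (hs : s ≤ 0) :
    gaussianReal 0 v (Set.Ioi s) ≤ ENNReal.ofReal (1/2 + (-s)/(σ*Real.sqrt (2*π))) := by
  have hvpos : (0:ℝ) < v := by rw [hv]; positivity
  have hv0 : v ≠ 0 := by intro h; rw [h] at hvpos; simp at hvpos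
  have hsub : Set.Ioi s ⊆ Set.Ioc s 0 ∪ Set.Ioi (0:ℝ) := by
    intro x hx
    rcases le_or_gt x 0 with h | h
    · exact Or.inl ⟨hx, h⟩
    · exact Or.inr h
  calc gaussianReal 0 v (Set.Ioi s)
      ≤ gaussianReal 0 v (Set.Ioc s 0) + gaussianReal 0 v (Set.Ioi 0) :=
        le_trans (measure_mono hsub) (measure_union_le _ _)
    _ ≤ ENNReal.ofReal ((-s)/(σ*Real.sqrt (2*π))) + ENNReal.ofReal (1/2) := by
        gcongr
        · rw [gaussianReal_apply_eq_integral _ hv0]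
          apply ENNReal.ofReal_le_ofReal
          have hC : ∀ x ∈ Set.Ioc s (0:ℝ), gaussianPDFReal 0 v x ≤ (σ*Real.sqrt (2*π))⁻¹ := by
            intro x _
            simp only [gaussianPDFReal, sub_zero]
            have h1 : Real.sqrt (2*π*(v:ℝ)) = σ * Real.sqrt (2*π) := by
              rw [hv, mul_comm (2*π) (σ^2), Real.sqrt_mul (by positivity), Real.sqrt_sq hσ.le]
            rw [h1]
            have : Real.exp (-x^2/(2*(v:ℝ))) ≤ 1 := by
              apply Real.exp_le_one_iff.mpr
              apply div_nonpos_of_nonpos_of_nonneg (neg_nonpos.mpr (sq_nonneg x)) (by positivity)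
            calc (σ*Real.sqrt (2*π))⁻¹ * Real.exp (-x^2/(2*(v:ℝ)))
                ≤ (σ*Real.sqrt (2*π))⁻¹ * 1 := by
                  gcongr
                  all_goals exact this
              _ = (σ*Real.sqrt (2*π))⁻¹ := mul_one _
          calc ∫ x in Set.Ioc s 0, gaussianPDFReal 0 v x
              ≤ ∫ _x in Set.Ioc s 0, (σ*Real.sqrt (2*π))⁻¹ := by
                apply setIntegral_mono_on
                  (integrable_gaussianPDFReal 0 v).integrableOn
                  (integrableOn_const (by simp [Real.volume_Ioc]))
                  measurableSet_Ioc hC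
            _ = (volume (Set.Ioc s 0)).toReal * (σ*Real.sqrt (2*π))⁻¹ := by
                rw [setIntegral_const, smul_eq_mul]; rfl
            _ = (-s) / (σ*Real.sqrt (2*π)) := by
                rw [Real.volume_Ioc, ENNReal.toReal_ofReal (by linarith), div_eq_mul_inv]
                ring_nf
        · rw [gaussianReal_apply_eq_integral _ hv0, gm_half v hv0]
    _ = ENNReal.ofReal (1/2 + (-s)/(σ*Real.sqrt (2*π))) := by
        rw [← ENNReal.ofReal_add (div_nonneg (by linarith) (by positivity)) (by norm_num)]
        congr 1
        ring

lemma gm_step1 (μ μ' ε : ℝ) {v : ℝ≥0} (hv0 : v ≠ 0) (A : Set ℝ) (hA : MeasurableSet A)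
    (B : Set ℝ) (hBdef : B = {x | Real.exp ε * gaussianPDFReal μ' v x < gaussianPDFReal μ v x})
    (hBmeas : MeasurableSet B) :
    gaussianReal μ v A ≤
      ENNReal.ofReal (Real.exp ε) * gaussianReal μ' v A + gaussianReal μ v B := by
  have hsub : A ⊆ (A ∩ Bᶜ) ∪ B := by
    intro x hx
    by_cases h : x ∈ B
    · exact Or.inr h
    · exact Or.inl ⟨hx, h⟩
  have hkey : gaussianReal μ v (A ∩ Bᶜ) ≤
      ENNReal.ofReal (Real.exp ε) * gaussianReal μ' v (A ∩ Bᶜ) := by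
    rw [gaussianReal_apply _ hv0, gaussianReal_apply _ hv0,
      ← lintegral_const_mul _ (measurable_gaussianPDF μ' v)]
    apply setLIntegral_mono (measurable_const.mul (measurable_gaussianPDF μ' v))
    intro x hx
    have hxB : x ∉ B := hx.2
    rw [hBdef] at hxB
    simp only [Set.mem_setOf_eq, not_lt] at hxB
    simp only [gaussianPDF_def, Pi.mul_apply]; rw [← ENNReal.ofReal_mul (Real.exp_nonneg ε)]
    exact ENNReal.ofReal_le_ofReal hxB
  calc gaussianReal μ v A
      ≤ gaussianReal μ v (A ∩ Bᶜ) + gaussianReal μ v B :=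
        le_trans (measure_mono hsub) (measure_union_le _ _)
    _ ≤ ENNReal.ofReal (Real.exp ε) * gaussianReal μ' v (A ∩ Bᶜ) + gaussianReal μ v B :=
        add_le_add hkey le_rfl
    _ ≤ ENNReal.ofReal (Real.exp ε) * gaussianReal μ' v A + gaussianReal μ v B :=
        add_le_add (mul_le_mul_right (measure_mono Set.inter_subset_left) _) le_rfl

lemma gm_step2 (Δ σ₀ σ ε t : ℝ) (hΔ : 0 < Δ) (hσ₀ : 0 < σ₀) (hσdef : σ = σ₀ * Δ) (hσ : 0 < σ)
    (hεpos : 0 < ε) (htdef : t = σ₀ * ε - 1 / (2 * σ₀))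
    {v : ℝ≥0} (hvc : (v:ℝ) = σ ^ 2) (hv0 : v ≠ 0)
    (μ μ' : ℝ) (hsens : |μ - μ'| ≤ Δ)
    (B : Set ℝ) (hBdef : B = {x | Real.exp ε * gaussianPDFReal μ' v x < gaussianPDFReal μ v x}) :
    gaussianReal μ v B ≤ gaussianReal 0 v (Set.Ioi (σ * t)) := by
  -- rewrite B in algebraic form
  set d : ℝ := μ - μ' with hddef
  have hBalt : B = {x | 2 * σ^2 * ε < d * (2*x - μ - μ')} := by
    rw [hBdef]
    ext x
    simp only [Set.mem_setOf_eq, gaussianPDFReal, hvc]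
    rw [mul_left_comm, ← Real.exp_add]
    have hK : (0:ℝ) < (Real.sqrt (2 * π * σ^2))⁻¹ := by positivity
    rw [mul_lt_mul_iff_right₀ hK, Real.exp_lt_exp]
    have h2 : (0:ℝ) < 2 * σ^2 := by positivity
    have key : ∀ a b : ℝ, (ε + a/(2*σ^2) < b/(2*σ^2)) ↔ 2*σ^2*ε < b - a := by
      intro a b
      constructor <;> intro h
      · have h3 : ε < (b-a)/(2*σ^2) := by rw [sub_div]; linarith
        rw [lt_div_iff₀ h2] at h3; linarith
      · have h3 : ε < (b-a)/(2*σ^2) := by rw [lt_div_iff₀ h2]; linarith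
        rw [sub_div] at h3; linarith
    rw [key]
    have h4 : -(x-μ)^2 - (-(x-μ')^2) = d * (2*x - μ - μ') := by rw [hddef]; ring
    rw [h4]
  -- bound the shifted threshold
  have hbound : ∀ e : ℝ, 0 < e → e ≤ Δ → σ * t ≤ σ^2*ε/e - e/2 := by
    intro e he heΔ
    have h1 : σ^2*ε/Δ ≤ σ^2*ε/e := by
      apply div_le_div_of_nonneg_left (by positivity) he heΔ
    have h2 : σ^2*ε/Δ = σ * (σ₀ * ε) := by
      rw [hσdef]; field_simp
    have h3 : e/2 ≤ Δ/2 := by linarith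
    have h4 : Δ/2 = σ * (1/(2*σ₀)) := by rw [hσdef]; field_simp
    rw [htdef, mul_sub]
    rw [h2] at h1
    rw [h4] at h3
    linarith
  rcases lt_trichotomy d 0 with hd | hd | hd
  · -- d < 0 : B = Iio r
    set e : ℝ := -d with hedef
    have he : 0 < e := by linarith
    have heΔ : e ≤ Δ := by rw [hedef]; rw [abs_le] at hsens; linarith
    set r : ℝ := (2*σ^2*ε/d + μ + μ')/2 with hrdef
    have hBr : B = Set.Iio r := by
      rw [hBalt]
      ext x
      simp only [Set.mem_setOf_eq, Set.mem_Iio]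
      rw [hrdef]
      constructor <;> intro h
      · have h5 : 2*x - μ - μ' < (2*σ^2*ε)/d := by
          rw [lt_div_iff_of_neg hd]; nlinarith
        linarith
      · have h5 : 2*x - μ - μ' < (2*σ^2*ε)/d := by linarith
        rw [lt_div_iff_of_neg hd] at h5; nlinarith
    rw [hBr, gm_center μ _ measurableSet_Iio]
    have hpre : (· + μ) ⁻¹' Set.Iio r = Set.Iio (r - μ) := by
      ext x
      simp only [Set.mem_preimage, Set.mem_Iio]
      exact lt_sub_iff_add_lt.symm
    rw [hpre, gm_symm]
    apply measure_mono
    apply Set.Ioi_subset_Ioi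
    have hdne : d ≠ 0 := ne_of_lt hd
    have h6 : -(r - μ) = σ^2*ε/e - e/2 := by
      rw [hrdef, hedef, div_neg]
      have hdd : 2*σ^2*ε/d = 2*(σ^2*ε/d) := by ring
      rw [hdd]
      ring
    rw [h6]
    exact hbound e he heΔ
  · -- d = 0 : B = ∅
    have hBr : B = ∅ := by
      rw [hBalt]
      ext x
      simp only [Set.mem_setOf_eq, Set.mem_empty_iff_false, iff_false, not_lt, hd, zero_mul]
      positivity
    rw [hBr]
    simp
  · -- d > 0 : B = Ioi r
    have heΔ : d ≤ Δ := by rw [abs_le] at hsens; linarith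
    set r : ℝ := (2*σ^2*ε/d + μ + μ')/2 with hrdef
    have hBr : B = Set.Ioi r := by
      rw [hBalt]
      ext x
      simp only [Set.mem_setOf_eq, Set.mem_Ioi]
      rw [hrdef]
      constructor <;> intro h
      · have h5 : (2*σ^2*ε)/d < 2*x - μ - μ' := by
          rw [div_lt_iff₀ hd]; nlinarith
        linarith
      · have h5 : (2*σ^2*ε)/d < 2*x - μ - μ' := by linarith
        rw [div_lt_iff₀ hd] at h5; nlinarith
    rw [hBr, gm_center μ _ measurableSet_Ioi]
    have hpre : (· + μ) ⁻¹' Set.Ioi r = Set.Ioi (r - μ) := by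
      ext x
      simp only [Set.mem_preimage, Set.mem_Ioi]
      exact sub_lt_iff_lt_add.symm
    rw [hpre]
    apply measure_mono
    apply Set.Ioi_subset_Ioi
    have h6 : r - μ = σ^2*ε/d - d/2 := by
      rw [hrdef]
      have hdd : 2*σ^2*ε/d = 2*(σ^2*ε/d) := by ring
      rw [hdd]
      ring
    rw [h6]
    exact hbound d hd heΔ

set_option maxHeartbeats 1000000 in
lemma gm_step3 (σ₀ σ ε δ c t : ℝ) (hσ₀ : 0 < σ₀) (hσ : 0 < σ)
    (hδ0 : 0 < δ) (hδ1 : δ < 1)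
    (hcdef : c = Real.sqrt (2 * Real.log (1.25 / δ)))
    (hcpos : 0 < c) (hc2 : c ^ 2 = 2 * Real.log (1.25 / δ))
    (hεc : c = σ₀ * ε) (hεpos : 0 < ε) (hε1 : ε < 1)
    (hδeq : Real.exp (-(c^2)/2) = δ / 1.25)
    (htdef : t = σ₀ * ε - 1 / (2 * σ₀))
    {v : ℝ≥0} (hvc : (v:ℝ) = σ ^ 2) :
    gaussianReal 0 v (Set.Ioi (σ * t)) ≤ ENNReal.ofReal δ := by
  have hu : σ₀ * (1 / (2 * σ₀)) = 1/2 := by field_simp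
  rcases le_or_gt 0 t with ht | ht
  · -- t ≥ 0
    refine le_trans (gm_tail_pos hσ hvc (by positivity : (0:ℝ) ≤ σ * t)) ?_
    apply ENNReal.ofReal_le_ofReal
    have hst : σ * t / σ = t := by field_simp
    rw [hst]
    -- c^2 - t^2 ≤ 1
    have hkey : c^2 - t^2 ≤ 1 := by
      have h1 : c^2 - t^2 = ε - (1/(2*σ₀))^2 := by
        rw [htdef, hεc]; nlinarith [hu]
      nlinarith [sq_nonneg (1/(2*σ₀))]
    have h2 : Real.exp (-t^2/2) ≤ Real.exp (1/2) * Real.exp (-(c^2)/2) := by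
      rw [← Real.exp_add]
      apply Real.exp_le_exp.mpr
      linarith
    have h3 : Real.exp (1/2) ≤ 5/2 := by
      have h4 : (1:ℝ)/2 ≤ Real.log (5/2) := by
        have := Real.one_sub_inv_le_log_of_pos (show (0:ℝ) < 5/2 by norm_num)
        norm_num at this
        linarith
      calc Real.exp (1/2) ≤ Real.exp (Real.log (5/2)) := Real.exp_le_exp.mpr h4
        _ = 5/2 := Real.exp_log (by norm_num)
    rw [hδeq] at h2
    calc Real.exp (-t^2/2) * (1/2) ≤ (Real.exp (1/2) * (δ/1.25)) * (1/2) := by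
          apply mul_le_mul_of_nonneg_right h2 (by norm_num)
      _ ≤ ((5/2) * (δ/1.25)) * (1/2) := by
          apply mul_le_mul_of_nonneg_right
            (mul_le_mul_of_nonneg_right h3 (by positivity)) (by norm_num)
      _ = δ := by ring
  · -- t < 0
    refine le_trans (gm_tail_neg hσ hvc (by nlinarith : σ * t ≤ 0)) ?_
    apply ENNReal.ofReal_le_ofReal
    have hsqrt2pi : (5:ℝ)/2 ≤ Real.sqrt (2*π) := by
      rw [show ((5:ℝ)/2) = Real.sqrt ((5/2)^2) from (Real.sqrt_sq (by norm_num)).symm]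
      apply Real.sqrt_le_sqrt
      nlinarith [Real.pi_gt_d2]
    have hsimp : (-(σ * t))/(σ*Real.sqrt (2*π)) = (-t)/Real.sqrt (2*π) := by
      rw [neg_div, neg_div, mul_div_mul_left _ _ (ne_of_gt hσ)]
    rw [hsimp]
    -- bounds on c
    have hlog125 : (1:ℝ)/5 ≤ Real.log 1.25 := by
      have := Real.one_sub_inv_le_log_of_pos (show (0:ℝ) < 1.25 by norm_num)
      norm_num at this
      linarith
    have hlogmono : Real.log 1.25 ≤ Real.log (1.25/δ) := by
      apply Real.log_le_log (by norm_num)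
      rw [le_div_iff₀ hδ0]; nlinarith
    have hc2lb : (2:ℝ)/5 ≤ c^2 := by rw [hc2]; linarith
    have hclb : (63:ℝ)/100 ≤ c := by nlinarith
    -- t < 0 gives c^2 ≤ 1/2
    have hcub : c^2 ≤ 1/2 := by
      have h1 : c < 1/(2*σ₀) := by
        rw [hεc]; rw [htdef] at ht; linarith
      have h2 : c * (1/(2*σ₀)) = ε * (1/2) := by
        rw [hεc, mul_comm σ₀ ε, mul_assoc, hu]
      have h3 : c * c < ε * (1/2) := by
        calc c * c < c * (1/(2*σ₀)) := by
              exact mul_lt_mul_of_pos_left h1 hcpos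
          _ = ε * (1/2) := h2
      rw [pow_two]
      linarith
    -- -t ≤ 1/(2c)
    have hmt : -t ≤ 1/(2*c) := by
      have h1 : 1/(2*σ₀) = ε/(2*c) := by
        rw [hεc]
        field_simp [hσ₀.ne', hεpos.ne']
      have h2 : ε/(2*c) ≤ 1/(2*c) :=
        (div_le_div_iff_of_pos_right (by positivity)).mpr hε1.le
      rw [htdef]
      have h3 : σ₀ * ε > 0 := by positivity
      linarith [h1 ▸ h2]
    -- final numeric chain
    have hd1 : (-t)/Real.sqrt (2*π) ≤ (1/(2*c))/(5/2) :=
      div_le_div₀ (by positivity) hmt (by norm_num) hsqrt2pi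
    have hd2 : (1/(2*c))/(5/2) ≤ (1/(2*(63/100)))/(5/2) := by
      apply div_le_div_of_nonneg_right _ (by norm_num)
      apply one_div_le_one_div_of_le (by norm_num) (by linarith)
    have hexp4 : Real.exp ((1:ℝ)/4) ≤ 4/3 := by
      have h4 : (1:ℝ)/4 ≤ Real.log (4/3) := by
        have := Real.one_sub_inv_le_log_of_pos (show (0:ℝ) < 4/3 by norm_num)
        norm_num at this
        linarith
      calc Real.exp (1/4) ≤ Real.exp (Real.log (4/3)) := Real.exp_le_exp.mpr h4
        _ = 4/3 := Real.exp_log (by norm_num)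
    have hδlb : (3:ℝ)/4 ≤ δ/1.25 := by
      rw [← hδeq]
      calc (3:ℝ)/4 = ((4:ℝ)/3)⁻¹ := by norm_num
        _ ≤ (Real.exp ((1:ℝ)/4))⁻¹ := inv_anti₀ (Real.exp_pos _) hexp4
        _ = Real.exp (-((1:ℝ)/4)) := (Real.exp_neg ((1:ℝ)/4)).symm
        _ ≤ Real.exp (-(c^2)/2) := Real.exp_le_exp.mpr (by linarith)
    have hδlb' : (15:ℝ)/16 ≤ δ := by
      have : (1.25:ℝ) > 0 := by norm_num
      rw [le_div_iff₀ this] at hδlb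
      norm_num at hδlb
      linarith
    have hfin : (1/(2*((63:ℝ)/100)))/(5/2) ≤ 7/16 := by norm_num
    linarith


/-- **One-dimensional Gaussian mechanism (core of Proposition 1).**
If `|μ - μ'| ≤ Δ` and the noise has variance `σ₀² Δ²`, then for every measurable set `A`,
`gaussianReal μ σ² A ≤ e^ε · gaussianReal μ' σ² A + δ` with
`ε = (1/σ₀)·√(2 ln(1.25/δ))`. -/
theorem gaussian_mechanism_one_dim_dp
    (Δ σ₀ : ℝ) (hΔ : 0 < Δ) (hσ₀ : 0 < σ₀)
    (δ : ℝ) (hδ : δ ∈ Set.Ioo (0 : ℝ) 1)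
    (ε : ℝ) (hε : ε = (1 / σ₀) * Real.sqrt (2 * Real.log (1.25 / δ)))
    (hε1 : ε < 1)
    (μ μ' : ℝ) (hsens : |μ - μ'| ≤ Δ) :
    ∀ A : Set ℝ, MeasurableSet A →
      gaussianReal μ (Real.toNNReal (σ₀ ^ 2 * Δ ^ 2)) A ≤
        ENNReal.ofReal (Real.exp ε) * gaussianReal μ' (Real.toNNReal (σ₀ ^ 2 * Δ ^ 2)) A +
          ENNReal.ofReal δ := by
  obtain ⟨hδ0, hδ1⟩ := hδ
  have hσ : 0 < σ₀ * Δ := mul_pos hσ₀ hΔ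
  have hvc : ((Real.toNNReal (σ₀ ^ 2 * Δ ^ 2)):ℝ) = (σ₀ * Δ) ^ 2 := by
    rw [Real.coe_toNNReal _ (by positivity)]; ring
  have hv0 : Real.toNNReal (σ₀ ^ 2 * Δ ^ 2) ≠ 0 := by
    intro h
    rw [Real.toNNReal_eq_zero] at h
    nlinarith
  have hlogpos : 0 < Real.log (1.25 / δ) := by
    apply Real.log_pos; rw [lt_div_iff₀ hδ0]; linarith
  have hcpos : 0 < Real.sqrt (2 * Real.log (1.25 / δ)) := Real.sqrt_pos.mpr (by linarith)
  have hc2 : (Real.sqrt (2 * Real.log (1.25 / δ))) ^ 2 = 2 * Real.log (1.25 / δ) :=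
    Real.sq_sqrt (by linarith)
  have hεc : Real.sqrt (2 * Real.log (1.25 / δ)) = σ₀ * ε := by rw [hε]; field_simp
  have hεpos : 0 < ε := by rw [hε]; positivity
  have hδeq : Real.exp (-((Real.sqrt (2 * Real.log (1.25 / δ)))^2)/2) = δ / 1.25 := by
    rw [hc2]
    have h9 : -(2 * Real.log (1.25/δ)) / 2 = - Real.log (1.25/δ) := by ring
    rw [h9, Real.exp_neg, Real.exp_log (by positivity), inv_div]
  intro A hA
  set B : Set ℝ := {x | Real.exp ε * gaussianPDFReal μ' (Real.toNNReal (σ₀ ^ 2 * Δ ^ 2)) x <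
    gaussianPDFReal μ (Real.toNNReal (σ₀ ^ 2 * Δ ^ 2)) x} with hBdef
  have hBmeas : MeasurableSet B :=
    measurableSet_lt (measurable_const.mul (measurable_gaussianPDFReal _ _))
      (measurable_gaussianPDFReal _ _)
  have hstep1 := gm_step1 μ μ' ε hv0 A hA B hBdef hBmeas
  have hstep2 := gm_step2 Δ σ₀ (σ₀ * Δ) ε (σ₀ * ε - 1 / (2 * σ₀)) hΔ hσ₀ rfl hσ hεpos rfl
    hvc hv0 μ μ' hsens B hBdef
  have hstep3 := gm_step3 σ₀ (σ₀ * Δ) ε δ (Real.sqrt (2 * Real.log (1.25 / δ)))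
    (σ₀ * ε - 1 / (2 * σ₀)) hσ₀ hσ hδ0 hδ1 rfl hcpos hc2 hεc hεpos hε1 hδeq rfl hvc
  calc gaussianReal μ (Real.toNNReal (σ₀ ^ 2 * Δ ^ 2)) A
      ≤ ENNReal.ofReal (Real.exp ε) * gaussianReal μ' (Real.toNNReal (σ₀ ^ 2 * Δ ^ 2)) A +
        gaussianReal μ (Real.toNNReal (σ₀ ^ 2 * Δ ^ 2)) B := hstep1
    _ ≤ ENNReal.ofReal (Real.exp ε) * gaussianReal μ' (Real.toNNReal (σ₀ ^ 2 * Δ ^ 2)) A +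
        ENNReal.ofReal δ := add_le_add le_rfl (hstep2.trans hstep3)
end

section
/- Let μ, μ' ∈ ℝ with Δ = |μ − μ'| > 0, let σ₀ > 0 and σ² = σ₀²·Δ², let ε ∈ (0,1) and δ ∈ (0,1), and assume σ₀ ≥ √(2·ln(1.25/δ))/ε. Define the privacy-loss function L(x) = ((x − μ')² − (x − μ)²)/(2σ²), which is the logarithm of the density ratio of gaussianReal(μ, σ²) to gaussianReal(μ', σ²). Then gaussianReal(μ, σ²)({x : L(x) > ε}) ≤ δ. -/
open MeasureTheory ProbabilityTheory Real

namespace GaussPriv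

open Set
open scoped NNReal ENNReal

lemma integral_pdf_shift (m c : ℝ) (v : ℝ≥0) :
    ∫ x in Set.Ioi (c + m), gaussianPDFReal m v x
      = ∫ x in Set.Ioi c, gaussianPDFReal 0 v x := by
  rw [← integral_indicator measurableSet_Ioi, ← integral_indicator measurableSet_Ioi,
    ← integral_add_right_eq_self
      (fun x => (Set.Ioi (c + m)).indicator (gaussianPDFReal m v) x) m]
  congr 1
  funext x
  by_cases hx : x ∈ Set.Ioi c
  · rw [Set.indicator_of_mem hx,
      Set.indicator_of_mem (by simpa using add_lt_add_right hx.out m),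
      gaussianPDFReal_add]
    simp
  · rw [Set.indicator_of_notMem hx, Set.indicator_of_notMem]
    intro h
    exact hx (by simpa using lt_of_add_lt_add_right h.out)

lemma integral_pdf_half (v : ℝ≥0) (hv : v ≠ 0) :
    ∫ x in Set.Ioi (0 : ℝ), gaussianPDFReal 0 v x = 1 / 2 := by
  have hvpos : (0 : ℝ) < (v : ℝ) := by
    exact_mod_cast hv.bot_lt
  simp only [gaussianPDFReal, sub_zero]
  rw [integral_const_mul]
  have h1 : ∀ x : ℝ, -x ^ 2 / (2 * (v : ℝ)) = -((2 * (v : ℝ))⁻¹) * x ^ 2 := by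
    intro x; ring
  simp_rw [h1]
  rw [integral_gaussian_Ioi]
  have h2 : π / (2 * (v : ℝ))⁻¹ = 2 * π * (v : ℝ) := by
    field_simp
  rw [h2]
  have h3 : (0 : ℝ) < Real.sqrt (2 * π * (v : ℝ)) := Real.sqrt_pos.2 (by positivity)
  field_simp

lemma integral_pdf_self (m : ℝ) (v : ℝ≥0) (hv : v ≠ 0) :
    ∫ x in Set.Ioi m, gaussianPDFReal m v x = 1 / 2 := by
  have h := integral_pdf_shift m 0 v
  rw [zero_add] at h
  rw [h, integral_pdf_half v hv]

/-- the main Gaussian tail bound, `s ≥ 0`. -/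
lemma gauss_tail_main (m σ s : ℝ) (hσ : 0 < σ) (hs : 0 ≤ s) :
    ∫ x in Set.Ioi (m + σ * s), gaussianPDFReal m ((σ ^ 2).toNNReal) x
      ≤ Real.exp (-s ^ 2 / 2) / 2 := by
  set v := (σ ^ 2).toNNReal with hv
  have hvc : (v : ℝ) = σ ^ 2 := Real.coe_toNNReal _ (sq_nonneg σ)
  have hvne : v ≠ 0 := by
    intro h
    have : (v : ℝ) = 0 := by rw [h]; simp
    rw [hvc] at this; nlinarith
  have key : ∀ x ∈ Set.Ioi (m + σ * s),
      gaussianPDFReal m v x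
        ≤ Real.exp (-s ^ 2 / 2) * gaussianPDFReal (m + σ * s) v x := by
    intro x hx
    have hx' : m + σ * s < x := hx
    simp only [gaussianPDFReal]
    rw [mul_left_comm]
    have hnn : (0 : ℝ) ≤ (Real.sqrt (2 * π * (v : ℝ)))⁻¹ := by positivity
    refine mul_le_mul_of_nonneg_left ?_ hnn
    rw [← Real.exp_add, Real.exp_le_exp, hvc]
    have h2σ : (0 : ℝ) < 2 * σ ^ 2 := by positivity
    rw [div_add_div _ _ (by norm_num : (2:ℝ) ≠ 0) (ne_of_gt h2σ)]
    rw [div_le_div_iff₀ h2σ (by positivity)]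
    nlinarith [mul_nonneg (mul_nonneg hσ.le hs) (le_of_lt (sub_pos.2 hx')),
      sq_nonneg (x - m - σ * s), sq_nonneg σ, sq_nonneg s]
  have hint1 : IntegrableOn (gaussianPDFReal m v) (Set.Ioi (m + σ * s)) :=
    (integrable_gaussianPDFReal m v).integrableOn
  have hint2 : IntegrableOn
      (fun x => Real.exp (-s ^ 2 / 2) * gaussianPDFReal (m + σ * s) v x)
      (Set.Ioi (m + σ * s)) :=
    ((integrable_gaussianPDFReal _ v).const_mul _).integrableOn
  calc ∫ x in Set.Ioi (m + σ * s), gaussianPDFReal m v x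
      ≤ ∫ x in Set.Ioi (m + σ * s),
          Real.exp (-s ^ 2 / 2) * gaussianPDFReal (m + σ * s) v x :=
        setIntegral_mono_on hint1 hint2 measurableSet_Ioi key
    _ = Real.exp (-s ^ 2 / 2)
          * ∫ x in Set.Ioi (m + σ * s), gaussianPDFReal (m + σ * s) v x :=
        integral_const_mul _ _
    _ = Real.exp (-s ^ 2 / 2) * (1 / 2) := by
        rw [integral_pdf_self _ v hvne]
    _ = Real.exp (-s ^ 2 / 2) / 2 := by ring

/-- crude bound, any `s ≤ 0`. -/
lemma gauss_tail_crude (m σ s : ℝ) (hσ : 0 < σ) (hs : s ≤ 0) :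
    ∫ x in Set.Ioi (m + σ * s), gaussianPDFReal m ((σ ^ 2).toNNReal) x
      ≤ 1 / 2 + (-s) / Real.sqrt (2 * π) := by
  set v := (σ ^ 2).toNNReal with hv
  have hvc : (v : ℝ) = σ ^ 2 := Real.coe_toNNReal _ (sq_nonneg σ)
  have hvne : v ≠ 0 := by
    intro h
    have : (v : ℝ) = 0 := by rw [h]; simp
    rw [hvc] at this; nlinarith
  have hle : m + σ * s ≤ m := by nlinarith
  have hsplit : Set.Ioi (m + σ * s) = Set.Ioc (m + σ * s) m ∪ Set.Ioi m :=
    (Set.Ioc_union_Ioi_eq_Ioi hle).symm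
  rw [hsplit, setIntegral_union (Set.Ioc_disjoint_Ioi le_rfl) measurableSet_Ioi
    (integrable_gaussianPDFReal m v).integrableOn
    (integrable_gaussianPDFReal m v).integrableOn]
  have hIoi : ∫ x in Set.Ioi m, gaussianPDFReal m v x = 1 / 2 :=
    integral_pdf_self m v hvne
  have hsq : Real.sqrt (2 * π * (v : ℝ)) = Real.sqrt (2 * π) * σ := by
    rw [hvc, Real.sqrt_mul (by positivity), Real.sqrt_sq hσ.le]
  have hC : ∀ x ∈ Set.Ioc (m + σ * s) m,
      ‖gaussianPDFReal m v x‖ ≤ (Real.sqrt (2 * π) * σ)⁻¹ := by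
    intro x _
    rw [Real.norm_of_nonneg (gaussianPDFReal_nonneg m v x)]
    unfold gaussianPDFReal
    rw [hsq]
    calc (Real.sqrt (2 * π) * σ)⁻¹ * Real.exp (-(x - m) ^ 2 / (2 * (v:ℝ)))
        ≤ (Real.sqrt (2 * π) * σ)⁻¹ * 1 := by
          refine mul_le_mul_of_nonneg_left ?_ (by positivity)
          rw [Real.exp_le_one_iff]
          rw [hvc]
          have : (0:ℝ) < 2 * σ ^ 2 := by positivity
          apply div_nonpos_of_nonpos_of_nonneg <;> nlinarith [sq_nonneg (x - m)]
      _ = (Real.sqrt (2 * π) * σ)⁻¹ := by ring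
  have hmeas : volume (Set.Ioc (m + σ * s) m) < ⊤ := by
    rw [Real.volume_Ioc]; exact ENNReal.ofReal_lt_top
  have hIoc : ∫ x in Set.Ioc (m + σ * s) m, gaussianPDFReal m v x
      ≤ (-s) / Real.sqrt (2 * π) := by
    have h := norm_setIntegral_le_of_norm_le_const hmeas hC
    rw [measureReal_def, Real.volume_Ioc, ENNReal.toReal_ofReal (by linarith)] at h
    have h2 : m - (m + σ * s) = σ * (-s) := by ring
    calc ∫ x in Set.Ioc (m + σ * s) m, gaussianPDFReal m v x
        ≤ ‖∫ x in Set.Ioc (m + σ * s) m, gaussianPDFReal m v x‖ := le_abs_self _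
      _ ≤ (Real.sqrt (2 * π) * σ)⁻¹ * (m - (m + σ * s)) := h
      _ = (-s) / Real.sqrt (2 * π) := by
          rw [h2]
          have hπ : (0:ℝ) < Real.sqrt (2 * π) := Real.sqrt_pos.2 (by positivity)
          field_simp
  linarith [hIoc, hIoi.le, hIoi.ge]

lemma pdf_neg (m : ℝ) (v : ℝ≥0) (x : ℝ) :
    gaussianPDFReal m v (-x) = gaussianPDFReal (-m) v x := by
  simp only [gaussianPDFReal]
  congr 2
  ring

lemma integral_pdf_Iio (m a : ℝ) (v : ℝ≥0) :
    ∫ x in Set.Iio (m - a), gaussianPDFReal m v x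
      = ∫ x in Set.Ioi (-m + a), gaussianPDFReal (-m) v x := by
  have h := integral_comp_neg_Ioi (a - m) (gaussianPDFReal m v)
  rw [neg_sub, integral_Iic_eq_integral_Iio] at h
  rw [← h, show a - m = -m + a by ring]
  refine setIntegral_congr_fun measurableSet_Ioi fun x _ => ?_
  exact pdf_neg m v x

lemma exp_le_inv_one_sub {x : ℝ} (hx : x < 1) :
    Real.exp x ≤ 1 / (1 - x) := by
  have h1 : 1 - x ≤ Real.exp (-x) := by linarith [Real.add_one_le_exp (-x)]
  rw [le_div_iff₀ (by linarith)]
  have h2 := Real.exp_pos x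
  calc Real.exp x * (1 - x) ≤ Real.exp x * Real.exp (-x) := by nlinarith
    _ = 1 := by rw [← Real.exp_add]; simp

lemma exp_fifth : Real.exp ((1:ℝ)/5) ≤ 5/4 := by
  have h2 : Real.exp ((1:ℝ)/20) ≤ 20/19 := by
    have h := exp_le_inv_one_sub (x := 1/20) (by norm_num)
    calc Real.exp ((1:ℝ)/20) ≤ 1/(1 - 1/20) := h
      _ = 20/19 := by norm_num
  have h3 : Real.exp ((1:ℝ)/5) = (Real.exp (1/20)) ^ 4 := by
    rw [← Real.exp_nat_mul]; norm_num
  rw [h3]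
  calc (Real.exp ((1:ℝ)/20)) ^ 4 ≤ ((20:ℝ)/19) ^ 4 :=
        pow_le_pow_left₀ (Real.exp_pos _).le h2 4
    _ ≤ 5/4 := by norm_num

lemma exp_quarter : Real.exp ((1:ℝ)/4) ≤ 64/49 := by
  have h2 : Real.exp ((1:ℝ)/8) ≤ 8/7 := by
    have h := exp_le_inv_one_sub (x := 1/8) (by norm_num)
    calc Real.exp ((1:ℝ)/8) ≤ 1/(1 - 1/8) := h
      _ = 8/7 := by norm_num
  have h3 : Real.exp ((1:ℝ)/4) = (Real.exp (1/8)) ^ 2 := by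
    rw [← Real.exp_nat_mul]; norm_num
  rw [h3]
  calc (Real.exp ((1:ℝ)/8)) ^ 2 ≤ ((8:ℝ)/7) ^ 2 :=
        pow_le_pow_left₀ (Real.exp_pos _).le h2 2
    _ ≤ 64/49 := by norm_num

lemma exp_half : Real.exp ((1:ℝ)/2) ≤ 16/9 := by
  have h2 : Real.exp ((1:ℝ)/4) ≤ 4/3 := by
    have h := exp_le_inv_one_sub (x := 1/4) (by norm_num)
    calc Real.exp ((1:ℝ)/4) ≤ 1/(1 - 1/4) := h
      _ = 4/3 := by norm_num
  have h3 : Real.exp ((1:ℝ)/2) = (Real.exp (1/4)) ^ 2 := by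
    rw [← Real.exp_nat_mul]; norm_num
  rw [h3]
  calc (Real.exp ((1:ℝ)/4)) ^ 2 ≤ ((4:ℝ)/3) ^ 2 :=
        pow_le_pow_left₀ (Real.exp_pos _).le h2 2
    _ ≤ 16/9 := by norm_num

set_option maxHeartbeats 1000000 in
/-- Numeric core of the Gaussian mechanism tail bound. -/
lemma key_bound (m σ σ₀ ε δ : ℝ) (hσ : 0 < σ) (hσ₀ : 0 < σ₀)
    (hε0 : 0 < ε) (hε1 : ε < 1) (hδ0 : 0 < δ) (hδ1 : δ < 1)
    (hbig : σ₀ ≥ Real.sqrt (2 * Real.log (1.25 / δ)) / ε) :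
    ∫ x in Set.Ioi (m + σ * (σ₀ * ε - 1 / (2 * σ₀))),
      gaussianPDFReal m ((σ ^ 2).toNNReal) x ≤ δ := by
  rw [show (1.25:ℝ) = 5/4 by norm_num] at hbig
  obtain ⟨s, hs_def⟩ : ∃ s:ℝ, s = σ₀ * ε - 1 / (2 * σ₀) := ⟨_, rfl⟩
  obtain ⟨L, hL_def⟩ : ∃ L:ℝ, L = Real.log ((5/4) / δ) := ⟨_, rfl⟩
  rw [← hs_def]
  rw [← hL_def] at hbig
  have hδ125 : (0:ℝ) < (5/4) / δ := by positivity
  have hL0 : 0 < L := by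
    rw [hL_def]
    exact Real.log_pos (by rw [lt_div_iff₀ hδ0]; linarith)
  have hq : Real.sqrt (2*L) ≤ σ₀ * ε := by
    rw [ge_iff_le, div_le_iff₀ hε0] at hbig; exact hbig
  have hq2 : 2 * L ≤ (σ₀ * ε)^2 := by
    nlinarith [Real.sq_sqrt (by positivity : (0:ℝ) ≤ 2*L), Real.sqrt_nonneg (2*L)]
  have h2 : σ₀ * ε * (1 / (2 * σ₀)) = ε / 2 := by field_simp
  have hexpL : Real.exp (-L) = (4/5) * δ := by
    rw [hL_def, ← Real.log_inv, Real.exp_log (by positivity), inv_div]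
    ring
  by_cases hs : 0 ≤ s
  · refine le_trans (gauss_tail_main m σ s hσ hs) ?_
    have hs2 : 2*L - ε ≤ s^2 := by
      have hexp : s^2 = (σ₀*ε)^2 - 2*(σ₀*ε*(1/(2*σ₀))) + (1/(2*σ₀))^2 := by
        rw [hs_def]; ring
      rw [hexp, h2]; nlinarith [sq_nonneg (1/(2*σ₀))]
    have hmono : Real.exp (-s^2/2) ≤ Real.exp (ε/2) * ((4/5) * δ) := by
      rw [← hexpL, ← Real.exp_add]
      exact Real.exp_le_exp.2 (by linarith)
    have hexpe : Real.exp (ε/2) ≤ 16/9 :=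
      le_trans (Real.exp_le_exp.2 (by linarith)) exp_half
    calc Real.exp (-s^2/2)/2 ≤ ((16:ℝ)/9) * ((4/5) * δ) / 2 := by
          nlinarith [Real.exp_pos (ε/2)]
      _ ≤ δ := by linarith
  · push_neg at hs
    refine le_trans (gauss_tail_crude m σ s hσ hs.le) ?_
    have hL02 : (1:ℝ)/5 ≤ L := by
      have h125 : (5:ℝ)/4 ≤ (5/4) / δ := by rw [le_div_iff₀ hδ0]; nlinarith
      have hmono := Real.log_le_log (by norm_num : (0:ℝ) < 5/4) h125
      have hlog : (1:ℝ)/5 ≤ Real.log (5/4) := by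
        rw [Real.le_log_iff_exp_le (by norm_num : (0:ℝ) < 5/4)]
        exact exp_fifth
      rw [hL_def]; linarith
    have hsq63 : (63:ℝ)/100 ≤ Real.sqrt (2*L) := by
      have hh : ((63:ℝ)/100)^2 ≤ 2*L := by nlinarith
      calc (63:ℝ)/100 = Real.sqrt ((63/100)^2) := by
            rw [Real.sqrt_sq (by norm_num : (0:ℝ) ≤ 63/100)]
        _ ≤ Real.sqrt (2*L) := Real.sqrt_le_sqrt hh
    have hσ₀63 : (63:ℝ)/100 ≤ σ₀ := by
      have h1 : Real.sqrt (2*L) ≤ Real.sqrt (2*L)/ε := by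
        rw [le_div_iff₀ hε0]; nlinarith [Real.sqrt_nonneg (2*L)]
      linarith [hbig]
    have hns : -s ≤ 1/(2*σ₀) := by
      rw [hs_def]; nlinarith [mul_pos hσ₀ hε0]
    have hns2 : -s ≤ 50/63 := by
      have h1 : 1/(2*σ₀) ≤ 50/63 := by
        rw [div_le_div_iff₀ (by linarith) (by norm_num)]; linarith
      linarith
    have hsqrt2pi : (5:ℝ)/2 ≤ Real.sqrt (2*π) := by
      have hh : ((5:ℝ)/2)^2 ≤ 2*π := by nlinarith [Real.pi_gt_d2]
      calc (5:ℝ)/2 = Real.sqrt ((5/2)^2) := by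
            rw [Real.sqrt_sq (by norm_num : (0:ℝ) ≤ 5/2)]
        _ ≤ _ := Real.sqrt_le_sqrt hh
    have hdiv : (-s)/Real.sqrt (2*π) ≤ (50/63)/(5/2) :=
      div_le_div₀ (by norm_num) hns2 (by norm_num) hsqrt2pi
    have hsε : σ₀*ε < 1/(2*σ₀) := by
      have := hs; rw [hs_def] at this; linarith
    have hq2' : (σ₀*ε)^2 < ε/2 := by
      have hp : 0 < σ₀*ε := mul_pos hσ₀ hε0
      have h3 : σ₀*ε*(σ₀*ε) < σ₀*ε*(1/(2*σ₀)) := by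
        exact mul_lt_mul_of_pos_left hsε hp
      rw [h2] at h3
      calc (σ₀*ε)^2 = σ₀*ε*(σ₀*ε) := by ring
        _ < ε/2 := h3
    have hL14 : L < 1/4 := by linarith
    have hδbig : (245:ℝ)/256 ≤ δ := by
      have hlt : (5/4)/δ = Real.exp L := by rw [hL_def, Real.exp_log hδ125]
      have hExp : Real.exp L ≤ 64/49 :=
        le_trans (Real.exp_le_exp.2 (by linarith)) exp_quarter
      have h64 : (5/4)/δ ≤ 64/49 := by rw [hlt]; exact hExp
      rw [div_le_div_iff₀ hδ0 (by norm_num)] at h64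
      linarith
    have hnum : (50:ℝ)/63/(5/2) = 20/63 := by norm_num
    rw [hnum] at hdiv
    linarith [hdiv]

end GaussPriv

/-- **Privacy-loss tail bound for the Gaussian mechanism (Dwork–Roth Theorem A.1 core).**
With `Δ = |μ − μ'| > 0`, variance `σ² = σ₀²·Δ²`, `ε, δ ∈ (0,1)`, and
`σ₀ ≥ √(2·ln(1.25/δ))/ε`, the privacy-loss function
`L(x) = ((x − μ')² − (x − μ)²)/(2σ²)` satisfies
`gaussianReal μ σ² {x : L x > ε} ≤ δ`. -/
theorem gaussian_privacy_loss_tail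
    (μ μ' : ℝ) (Δ : ℝ) (hΔdef : Δ = |μ - μ'|) (hΔ : 0 < Δ)
    (σ₀ : ℝ) (hσ₀ : 0 < σ₀)
    (σ2 : ℝ) (hσ2 : σ2 = σ₀ ^ 2 * Δ ^ 2)
    (ε : ℝ) (hε : ε ∈ Set.Ioo (0 : ℝ) 1)
    (δ : ℝ) (hδ : δ ∈ Set.Ioo (0 : ℝ) 1)
    (hσ₀big : σ₀ ≥ Real.sqrt (2 * Real.log (1.25 / δ)) / ε) :
    gaussianReal μ (Real.toNNReal σ2)
        {x | ((x - μ') ^ 2 - (x - μ) ^ 2) / (2 * σ2) > ε} ≤ ENNReal.ofReal δ := by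
  obtain ⟨hε0, hε1⟩ := hε
  obtain ⟨hδ0, hδ1⟩ := hδ
  have hσ2pos : 0 < σ2 := by rw [hσ2]; positivity
  have hvne : Real.toNNReal σ2 ≠ 0 := by
    simp only [ne_eq, Real.toNNReal_eq_zero, not_le]
    exact hσ2pos
  have hσpos : 0 < σ₀ * Δ := mul_pos hσ₀ hΔ
  have hveq : Real.toNNReal σ2 = (((σ₀ * Δ) ^ 2).toNNReal) := by
    rw [hσ2]; congr 1; ring
  rw [gaussianReal_apply_eq_integral _ hvne, hveq]
  refine ENNReal.ofReal_le_ofReal ?_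
  rcases abs_cases (μ - μ') with ⟨habs, hsign⟩ | ⟨habs, hsign⟩
  · -- μ - μ' = Δ ≥ 0
    have hd : μ' = μ - Δ := by rw [hΔdef, habs]; ring
    have hset : {x : ℝ | ((x - μ') ^ 2 - (x - μ) ^ 2) / (2 * σ2) > ε}
        = Set.Ioi (μ + (σ₀ * Δ) * (σ₀ * ε - 1 / (2 * σ₀))) := by
      ext x
      simp only [Set.mem_setOf_eq, Set.mem_Ioi, gt_iff_lt]
      rw [lt_div_iff₀ (by positivity : (0:ℝ) < 2 * σ2)]
      have hσs : (σ₀ * Δ) * (σ₀ * ε - 1 / (2 * σ₀)) = σ₀^2 * Δ * ε - Δ/2 := by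
        field_simp
      rw [hσs, hd, hσ2]
      constructor
      · intro h; nlinarith [hΔ, h, mul_pos hΔ hΔ]
      · intro h; nlinarith [hΔ, h, mul_pos hΔ hΔ]
    rw [hset]
    exact GaussPriv.key_bound μ (σ₀ * Δ) σ₀ ε δ hσpos hσ₀ hε0 hε1 hδ0 hδ1 hσ₀big
  · -- μ - μ' < 0, so Δ = μ' - μ
    have hd : μ' = μ + Δ := by rw [hΔdef, habs]; ring
    have hset : {x : ℝ | ((x - μ') ^ 2 - (x - μ) ^ 2) / (2 * σ2) > ε}
        = Set.Iio (μ - (σ₀ * Δ) * (σ₀ * ε - 1 / (2 * σ₀))) := by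
      ext x
      simp only [Set.mem_setOf_eq, Set.mem_Iio, gt_iff_lt]
      rw [lt_div_iff₀ (by positivity : (0:ℝ) < 2 * σ2)]
      have hσs : (σ₀ * Δ) * (σ₀ * ε - 1 / (2 * σ₀)) = σ₀^2 * Δ * ε - Δ/2 := by
        field_simp
      rw [hσs, hd, hσ2]
      constructor
      · intro h; nlinarith [hΔ, h, mul_pos hΔ hΔ]
      · intro h; nlinarith [hΔ, h, mul_pos hΔ hΔ]
    rw [hset, GaussPriv.integral_pdf_Iio]
    exact GaussPriv.key_bound (-μ) (σ₀ * Δ) σ₀ ε δ hσpos hσ₀ hε0 hε1 hδ0 hδ1 hσ₀big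
end
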